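/- Let f : 2^X → 2^Y be a poset embedding between the power sets of finite sets X and Y, and suppose the top element f(X) has cardinality N. Then for every nonempty I ⊆ X, the intersection ⋂_{a ∈ I} f(X \ {a}) has cardinality at most N − |I|. -/

import Mathlib

open Finset

/-- Let `f : 2^X → 2^Y` be a poset embedding between power
sets of finite sets, with top element `f X` of cardinality `N`. Then for every
nonempty `I ⊆ X`, the intersection of the top children `f (X \ {a})`, `a ∈ I`,
has cardinality at most `N - |I|`. -/
theorem statement3 {α β : Type*} [DecidableEq α] [DecidableEq β]
    (X : Finset α) (Y : Finset β) (f : Finset α → Finset β)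
    (hmap : ∀ S, S ⊆ X → f S ⊆ Y)
    (hord : ∀ S T, S ⊆ X → T ⊆ X → (S ⊆ T ↔ f S ⊆ f T))
    (hinj : ∀ S T, S ⊆ X → T ⊆ X → f S = f T → S = T)
    (N : ℕ) (hN : (f X).card = N)
    (I : Finset α) (hIne : I.Nonempty) (hIX : I ⊆ X) :
    (I.inf' hIne fun a => f (X.erase a)).card + I.card ≤ N := by
  revert hIX
  induction hIne using Finset.Nonempty.cons_induction with
  | singleton a =>
    intro hIX
    have haX : a ∈ X := hIX (mem_singleton_self a)
    have hsub : f (X.erase a) ⊆ f X :=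
      (hord _ _ (erase_subset _ _) (Subset.refl _)).1 (erase_subset _ _)
    have hne : f (X.erase a) ≠ f X := by
      intro h
      have hEq := hinj _ _ (erase_subset _ _) (Subset.refl _) h
      rw [← hEq] at haX
      exact (notMem_erase a X) haX
    have hlt : (f (X.erase a)).card < N :=
      hN ▸ card_lt_card (ssubset_of_subset_of_ne hsub hne)
    simpa using hlt
  | cons a J haJ hJne ih =>
    intro hIX
    have haX : a ∈ X := hIX (mem_cons_self a J)
    have hJX : J ⊆ X := fun b hb => hIX (mem_cons.2 (Or.inr hb))
    have ihJ := ih hJX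
    -- f (X \ J) is contained in the intersection over J
    have hsubInf : f (X \ J) ⊆ J.inf' hJne fun b => f (X.erase b) := by
      show f (X \ J) ≤ _
      apply le_inf'
      intro b hb
      exact (hord _ _ sdiff_subset (erase_subset _ _)).1
        (fun x hx => mem_erase.2 ⟨fun h => (mem_sdiff.1 hx).2 (h ▸ hb),
          (mem_sdiff.1 hx).1⟩)
    -- but f (X \ J) is not contained in f (X.erase a)
    have hnot : ¬ f (X \ J) ⊆ f (X.erase a) := by
      intro h
      have := (hord _ _ sdiff_subset (erase_subset _ _)).2 h
      exact (notMem_erase a X) (this (mem_sdiff.2 ⟨haX, haJ⟩))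
    obtain ⟨y, hy1, hy2⟩ := not_subset.1 hnot
    have hyInf : y ∈ J.inf' hJne fun b => f (X.erase b) := hsubInf hy1
    rw [inf'_cons hJne, card_cons, inf_eq_inter]
    have hlt : ((f (X.erase a)) ∩ (J.inf' hJne fun b => f (X.erase b))).card
        < (J.inf' hJne fun b => f (X.erase b)).card := by
      refine card_lt_card ⟨inter_subset_right, fun h => ?_⟩
      exact hy2 (mem_inter.1 (h hyInf)).1
    omega
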